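/- A commutative reduced ring R has no countably generated sd-ideal if and only if R satisfies property (A) and Min(R) is countably compact (every countable open cover by basic opens has a finite subcover). -/

import Mathlib

/-- In a reduced ring, every element of a minimal prime is killed by an element
outside that prime. -/
lemma min_prime_mem_zd {R : Type*} [CommRing R] [IsReduced R] {P : Ideal R}
    (hP : P ∈ minimalPrimes R) {x : R} (hx : x ∈ P) : ∃ s, s ∉ P ∧ s * x = 0 := by
  haveI : P.IsPrime := hP.1.1
  have h1 : IsNilpotent (algebraMap R (Localization P.primeCompl) x) := by
    haveI : Ring.KrullDimLE 0 (Localization.AtPrime P) := .of_isLocalization _ hP _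
    rw [Ring.KrullDimLE.isNilpotent_iff_mem_maximalIdeal]
    exact (IsLocalization.AtPrime.to_map_mem_maximal_iff _ P x).mpr hx
  obtain ⟨n, hn⟩ := h1
  rw [← map_pow] at hn
  obtain ⟨s, hs⟩ := (IsLocalization.map_eq_zero_iff P.primeCompl _ _).mp hn
  refine ⟨s, s.2, ?_⟩
  have h2 : ((s : R) * x) ^ (n + 1) = 0 := by
    have : ((s : R) * x) ^ (n + 1) = (s : R) ^ n * x * ((s : R) * x ^ n) := by ring
    rw [this, hs, mul_zero]
  exact IsNilpotent.eq_zero ⟨n + 1, h2⟩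

/-- A finite set inside a minimal prime of a reduced ring has a common annihilator
outside the prime. -/
lemma ann_of_finset_subset {R : Type*} [CommRing R] [IsReduced R] {P : Ideal R}
    (hP : P ∈ minimalPrimes R) (t : Finset R) (ht : ∀ x ∈ t, x ∈ P) :
    ∃ a, a ∉ P ∧ ∀ x ∈ t, a * x = 0 := by
  classical
  haveI : P.IsPrime := hP.1.1
  induction t using Finset.induction with
  | empty =>
    refine ⟨1, fun h1 => ?_, fun x hx => absurd hx (Finset.notMem_empty x)⟩
    exact ‹P.IsPrime›.ne_top ((Ideal.eq_top_iff_one P).mpr h1)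
  | @insert y u hyu ih =>
    obtain ⟨a, haP, ha⟩ := ih (fun x hx => ht x (Finset.mem_insert_of_mem hx))
    obtain ⟨s, hsP, hs⟩ := min_prime_mem_zd hP (ht y (Finset.mem_insert_self y u))
    refine ⟨s * a, fun hmem => ?_, fun x hx => ?_⟩
    · rcases ‹P.IsPrime›.mem_or_mem hmem with h | h
      exacts [hsP h, haP h]
    · rcases Finset.mem_insert.mp hx with rfl | hx
      · rw [mul_comm s a, mul_assoc, hs, mul_zero]
      · rw [mul_assoc, ha x hx, mul_zero]

/-- The minimal prime spectrum of `R`, with the subspace (Zariski) topology. -/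
abbrev MinSpec (R : Type*) [CommRing R] :=
  {P : PrimeSpectrum R // P.asIdeal ∈ minimalPrimes R}

/-- R has no countably generated sd-ideal iff R has property (A) and
Min(R) is countably compact (countable basic open covers admit finite subcovers). -/
theorem no_countable_sd_iff (R : Type*) [CommRing R] [IsReduced R] :
    (¬ ∃ I : Ideal R, (∃ S : Set R, S.Countable ∧ I = Ideal.span S) ∧
        (∀ x ∈ I, x ∉ nonZeroDivisors R) ∧ ∀ P ∈ minimalPrimes R, ¬ I ≤ P) ↔
    ((∀ I : Ideal R, I.FG → (∀ x ∈ I, x ∉ nonZeroDivisors R) →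
        ∃ a : R, a ≠ 0 ∧ ∀ x ∈ I, a * x = 0) ∧
      ∀ S : Set R, S.Countable → (∀ P : MinSpec R, ∃ a ∈ S, a ∉ P.1.asIdeal) →
        ∃ T : Finset R, ↑T ⊆ S ∧ ∀ P : MinSpec R, ∃ a ∈ T, a ∉ P.1.asIdeal) := by
  constructor
  · intro h
    constructor
    · -- property (A)
      intro I hfg hzd
      obtain ⟨t, rfl⟩ := hfg
      by_cases hmin : ∃ P ∈ minimalPrimes R, Ideal.span (↑t : Set R) ≤ P
      · obtain ⟨P, hP, hle⟩ := hmin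
        obtain ⟨a, haP, ha⟩ := ann_of_finset_subset hP t
          (fun x hx => hle (Ideal.subset_span hx))
        refine ⟨a, fun h0 => haP (h0 ▸ P.zero_mem), fun x hx => ?_⟩
        have hker : Ideal.span (↑t : Set R) ≤ LinearMap.ker (LinearMap.mulLeft R a) := by
          rw [Ideal.span_le]
          intro y hy
          simpa using ha y hy
        simpa using hker hx
      · push_neg at hmin
        exact absurd ⟨Ideal.span ↑t, ⟨↑t, t.countable_toSet, rfl⟩, hzd, hmin⟩ h
    · -- countable compactness
      intro S hS hcover
      by_contra hnc
      push_neg at hnc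
      refine h ⟨Ideal.span S, ⟨S, hS, rfl⟩, ?_, ?_⟩
      · intro x hx hxnzd
        obtain ⟨u, huS, hxu⟩ := Submodule.mem_span_finite_of_mem_span hx
        obtain ⟨P, hPall⟩ := hnc u huS
        have hxP : x ∈ P.1.asIdeal :=
          (Ideal.span_le.mpr (fun y hy => hPall y hy)) hxu
        obtain ⟨s, hsP, hsx⟩ := min_prime_mem_zd P.2 hxP
        exact hsP (((mem_nonZeroDivisors_iff.mp hxnzd).2 s hsx) ▸ P.1.asIdeal.zero_mem)
      · intro P hP hle
        obtain ⟨a, haS, haP⟩ := hcover ⟨⟨P, hP.1.1⟩, hP⟩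
        exact haP (hle (Ideal.subset_span haS))
  · rintro ⟨hA, hC⟩ ⟨I, ⟨S, hSc, rfl⟩, hzd, hnle⟩
    have hcover : ∀ P : MinSpec R, ∃ a ∈ S, a ∉ P.1.asIdeal := by
      intro P
      by_contra hc
      push_neg at hc
      exact hnle P.1.asIdeal P.2 (Ideal.span_le.mpr hc)
    obtain ⟨T, hTS, hTcov⟩ := hC S hSc hcover
    have hJle : Ideal.span (↑T : Set R) ≤ Ideal.span S :=
      Ideal.span_le.mpr (fun x hx => Ideal.subset_span (hTS hx))
    obtain ⟨a, ha0, haann⟩ := hA (Ideal.span ↑T) (Submodule.fg_span T.finite_toSet)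
      (fun x hx => hzd x (hJle hx))
    have hmin : ∀ Q ∈ minimalPrimes R, a ∈ Q := by
      intro Q hQ
      obtain ⟨u, huT, huQ⟩ := hTcov ⟨⟨Q, hQ.1.1⟩, hQ⟩
      have : a * u = 0 := haann u (Ideal.subset_span huT)
      exact (hQ.1.1.mem_or_mem (this ▸ Q.zero_mem)).resolve_right huQ
    have : a ∈ sInf (minimalPrimes R) := Ideal.mem_sInf.mpr (fun {Q} hQ => hmin Q hQ)
    rw [show minimalPrimes R = Ideal.minimalPrimes ⊥ from rfl,
      Ideal.sInf_minimalPrimes] at this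
    exact ha0 (IsNilpotent.eq_zero ((mem_nilradical).mp this))
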